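/- Let F : ℝ³ → ℝ³ be a continuously differentiable vector field that is nowhere zero, and suppose curl F = f · F for a function f : ℝ³ → ℝ that is nowhere zero. Let X, Y : ℝ³ → ℝ³ be continuously differentiable vector fields with ⟪F(x), X(x)⟫ = 0 and ⟪F(x), Y(x)⟫ = 0 for all x ∈ ℝ³, and let x₀ ∈ ℝ³ be a point at which X(x₀) and Y(x₀) are linearly independent. Then ⟪F(x₀), [X,Y](x₀)⟫ ≠ 0, where [X,Y](x) = (DY)(x)·X(x) − (DX)(x)·Y(x) is the Lie bracket (DX denoting the total derivative of X). In particular, the plane field ker F♭ = {v : ⟪F, v⟫ = 0} is nowhere integrable. -/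

import Mathlib

open scoped RealInnerProductSpace

noncomputable section

/-- Euclidean 3-space. -/
abbrev R3 := EuclideanSpace ℝ (Fin 3)

/-- `pd F i j x` is the partial derivative `∂ᵢ Fⱼ (x)`:
the derivative of the `j`-th component of `F` in the `i`-th coordinate direction. -/
def pd (F : R3 → R3) (i j : Fin 3) (x : R3) : ℝ :=
  fderiv ℝ F x (EuclideanSpace.single i 1) j

/-- The curl of a vector field on ℝ³ (with 0-indexed coordinates):
`curl F = (∂₁F₂ − ∂₂F₁, ∂₂F₀ − ∂₀F₂, ∂₀F₁ − ∂₁F₀)`. -/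
def curl (F : R3 → R3) (x : R3) : R3 :=
  (WithLp.equiv 2 (Fin 3 → ℝ)).symm
    ![pd F 1 2 x - pd F 2 1 x,
      pd F 2 0 x - pd F 0 2 x,
      pd F 0 1 x - pd F 1 0 x]

/-- The divergence of a vector field on ℝ³: `div F = ∂₀F₀ + ∂₁F₁ + ∂₂F₂`. -/
def div3 (F : R3 → R3) (x : R3) : ℝ :=
  pd F 0 0 x + pd F 1 1 x + pd F 2 2 x

/-- Applying a finite sum of vectors in `R3` coordinatewise. -/
lemma sum_apply' {ι : Type*} (s : Finset ι) (g : ι → R3) (j : Fin 3) :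
    (∑ i ∈ s, g i) j = ∑ i ∈ s, g i j :=
  map_sum (EuclideanSpace.proj j (𝕜 := ℝ)) g s

/-- The real inner product on `R3` as a coordinate sum. -/
lemma inner_eq (x y : R3) : ⟪x, y⟫ = ∑ i, x i * y i := by
  simp [PiLp.inner_apply, RCLike.inner_apply, mul_comm]

/-- Components of the total derivative in terms of partial derivatives. -/
lemma fderiv_comp_eq (F : R3 → R3) (x₀ v : R3) (j : Fin 3) :
    fderiv ℝ F x₀ v j = ∑ i : Fin 3, v i * pd F i j x₀ := by
  have hv : v = ∑ i : Fin 3, v i • EuclideanSpace.single i (1:ℝ) := by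
    ext j
    rw [sum_apply']
    simp [PiLp.smul_apply, EuclideanSpace.single_apply]
  conv_lhs => rw [hv]
  rw [map_sum, sum_apply']
  simp [PiLp.smul_apply, pd]

/-- Differentiating a vanishing inner product `⟪F, G⟫ ≡ 0`. -/
lemma key_deriv (F G : R3 → R3) (hF : ContDiff ℝ 1 F) (hG : ContDiff ℝ 1 G)
    (hker : ∀ x, ⟪F x, G x⟫ = 0) (x₀ v : R3) :
    ⟪F x₀, fderiv ℝ G x₀ v⟫ + ⟪fderiv ℝ F x₀ v, G x₀⟫ = 0 := by
  have hFd : DifferentiableAt ℝ F x₀ := hF.differentiable one_ne_zero x₀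
  have hGd : DifferentiableAt ℝ G x₀ := hG.differentiable one_ne_zero x₀
  rw [← fderiv_inner_apply ℝ hFd hGd v]
  have : (fun t => ⟪F t, G t⟫) = fun _ => (0:ℝ) := funext hker
  rw [this, fderiv_fun_const]
  rfl

/-- Components of the Beltrami equation `curl F = f • F`. -/
lemma curl_comp (F : R3 → R3) (x : R3) (f : R3 → ℝ) (h : curl F x = f x • F x) (i : Fin 3) :
    (![pd F 1 2 x - pd F 2 1 x, pd F 2 0 x - pd F 0 2 x, pd F 0 1 x - pd F 1 0 x] i)
      = f x * F x i := by
  have := congrArg (fun w : R3 => w i) h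
  simpa [curl, WithLp.equiv_symm_apply, PiLp.toLp_apply, PiLp.smul_apply, smul_eq_mul] using this

/-- If `F` is a nowhere-zero `C¹` rotational Beltrami field
(`curl F = f F` with `f` nowhere zero), and `X`, `Y` are `C¹` sections of the plane
field `ker F♭` that are linearly independent at `x₀`, then the Lie bracket
`[X,Y](x₀) = DY(x₀)·X(x₀) − DX(x₀)·Y(x₀)` is not orthogonal to `F(x₀)`;
i.e. the plane field `ker F♭` is nowhere integrable. -/
theorem rotational_beltrami_plane_field_nonintegrable
    (F : R3 → R3) (hF : ContDiff ℝ 1 F) (hFne : ∀ x, F x ≠ 0)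
    (f : R3 → ℝ) (hfne : ∀ x, f x ≠ 0)
    (hBeltrami : ∀ x, curl F x = f x • F x)
    (X Y : R3 → R3) (hX : ContDiff ℝ 1 X) (hY : ContDiff ℝ 1 Y)
    (hXker : ∀ x, ⟪F x, X x⟫ = 0) (hYker : ∀ x, ⟪F x, Y x⟫ = 0)
    (x₀ : R3) (hindep : LinearIndependent ℝ ![X x₀, Y x₀]) :
    ⟪F x₀, fderiv ℝ Y x₀ (X x₀) - fderiv ℝ X x₀ (Y x₀)⟫ ≠ 0 := by
  set M : Matrix (Fin 3) (Fin 3) ℝ :=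
    Matrix.of ![fun i => F x₀ i, fun i => X x₀ i, fun i => Y x₀ i] with hM
  -- rows of M are linearly independent
  have hrows : LinearIndependent ℝ (fun i => M i) := by
    rw [Fintype.linearIndependent_iff]
    intro g hg
    have hgj : ∀ j, g 0 * F x₀ j + g 1 * X x₀ j + g 2 * Y x₀ j = 0 := by
      intro j
      have := congrFun hg j
      simpa [hM, Fin.sum_univ_three, Matrix.of_apply, Pi.add_apply, Pi.smul_apply,
        smul_eq_mul] using this
    have h0 : g 0 = 0 := by
      have e : g 0 * ⟪F x₀, F x₀⟫ + g 1 * ⟪F x₀, X x₀⟫ + g 2 * ⟪F x₀, Y x₀⟫ = 0 := by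
        simp only [inner_eq, Fin.sum_univ_three]
        linear_combination F x₀ 0 * hgj 0 + F x₀ 1 * hgj 1 + F x₀ 2 * hgj 2
      rw [hXker, hYker] at e
      have hu : ⟪F x₀, F x₀⟫ ≠ 0 := inner_self_ne_zero.mpr (hFne x₀)
      have : g 0 * ⟪F x₀, F x₀⟫ = 0 := by linarith
      exact (mul_eq_zero.mp this).resolve_right hu
    have h12 : (g 1 • X x₀ + g 2 • Y x₀ : R3) = 0 := by
      ext j
      have := hgj j
      rw [h0] at this
      simpa [PiLp.smul_apply, smul_eq_mul] using by linarith
    have := Fintype.linearIndependent_iff.mp hindep ![g 1, g 2] (by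
      simpa [Fin.sum_univ_two] using h12)
    intro i
    fin_cases i
    · exact h0
    · exact this 0
    · exact this 1
  have hdet : M.det ≠ 0 := by
    have := Matrix.linearIndependent_rows_iff_isUnit.mp hrows
    exact ((Matrix.isUnit_iff_isUnit_det _).mp this).ne_zero
  -- curl components
  have c0 : pd F 1 2 x₀ - pd F 2 1 x₀ = f x₀ * F x₀ 0 := by
    simpa using curl_comp F x₀ f (hBeltrami x₀) 0
  have c1 : pd F 2 0 x₀ - pd F 0 2 x₀ = f x₀ * F x₀ 1 := by
    simpa using curl_comp F x₀ f (hBeltrami x₀) 1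
  have c2 : pd F 0 1 x₀ - pd F 1 0 x₀ = f x₀ * F x₀ 2 := by
    simpa using curl_comp F x₀ f (hBeltrami x₀) 2
  -- derivative identities
  have hX' := key_deriv F X hF hX hXker x₀ (Y x₀)
  have hY' := key_deriv F Y hF hY hYker x₀ (X x₀)
  have hT : ⟪F x₀, fderiv ℝ Y x₀ (X x₀) - fderiv ℝ X x₀ (Y x₀)⟫
      = ⟪fderiv ℝ F x₀ (Y x₀), X x₀⟫ - ⟪fderiv ℝ F x₀ (X x₀), Y x₀⟫ := by
    rw [inner_sub_right]
    linarith
  have hexp : ⟪fderiv ℝ F x₀ (Y x₀), X x₀⟫ - ⟪fderiv ℝ F x₀ (X x₀), Y x₀⟫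
      = - f x₀ * M.det := by
    rw [inner_eq, inner_eq, Matrix.det_fin_three]
    simp only [fderiv_comp_eq, Fin.sum_univ_three, hM, Matrix.of_apply, Matrix.cons_val',
      Matrix.cons_val_zero, Matrix.cons_val_one, Matrix.head_cons, Matrix.cons_val_two,
      Matrix.tail_cons, Matrix.empty_val', Matrix.cons_val_fin_one, Matrix.head_fin_const]
    linear_combination (Y x₀ 1 * X x₀ 2 - X x₀ 1 * Y x₀ 2) * c0 +
      (Y x₀ 2 * X x₀ 0 - X x₀ 2 * Y x₀ 0) * c1 +
      (Y x₀ 0 * X x₀ 1 - X x₀ 0 * Y x₀ 1) * c2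
  rw [hT, hexp]
  exact mul_ne_zero (neg_ne_zero.mpr (hfne x₀)) hdet

end
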